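/- Let β < 0, let f be an admissible function on ℝ² with ∫_{ℝ²} f dx = M > 0, and for y ∈ ℝ² set f_y(x) = f(x+y). Then lim_{|y|→∞} F⁻_β[f_y] = −∞ and lim_{|y|→∞} F⁺_β[f_y] = −∞; in particular, for β < 0 neither F⁺_β nor F⁻_β is bounded from below on the set of admissible functions of mass M. -/

import Mathlib

open MeasureTheory Real Filter

noncomputable section

/-- The Euclidean plane ℝ². -/
abbrev E2 := EuclideanSpace ℝ (Fin 2)

/-- The probability density μ(x) = 1/(π (1+|x|²)²) on ℝ². -/
def mu2 (x : E2) : ℝ := 1 / (π * (1 + ‖x‖ ^ 2) ^ 2)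

/-- The external potential V(x) = −log μ(x) = 2 log(1+|x|²) + log π. -/
def Vpot (x : E2) : ℝ := 2 * Real.log (1 + ‖x‖ ^ 2) + Real.log π

/-- A function f on ℝ² is admissible if it is measurable, nonnegative a.e., integrable,
and ∫ f |log f|, ∫ V f and ∬ f(x) f(y) |log|x−y|| are all finite. -/
def Admissible (f : E2 → ℝ) : Prop :=
  Measurable f ∧ (∀ᵐ x : E2, 0 ≤ f x) ∧ Integrable f ∧
  Integrable (fun x => f x * |Real.log (f x)|) ∧
  Integrable (fun x => Vpot x * f x) ∧
  Integrable (fun p : E2 × E2 => f p.1 * f p.2 * |Real.log ‖p.1 - p.2‖|)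

/-- The repulsive free energy F⁺_β. -/
def Fplus (β : ℝ) (f : E2 → ℝ) : ℝ :=
  (∫ x, f x * Real.log (f x)) + β * (∫ x, Vpot x * f x)
    - (1 / (4 * π)) * ∫ p : E2 × E2, f p.1 * f p.2 * Real.log ‖p.1 - p.2‖

/-- The attractive free energy F⁻_β. -/
def Fminus (β : ℝ) (f : E2 → ℝ) : ℝ :=
  (∫ x, f x * Real.log (f x)) + β * (∫ x, Vpot x * f x)
    + (1 / (4 * π)) * ∫ p : E2 × E2, f p.1 * f p.2 * Real.log ‖p.1 - p.2‖

lemma vpot_nonneg (x : E2) : 0 ≤ Vpot x := by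
  have h1 : (0:ℝ) ≤ Real.log (1 + ‖x‖ ^ 2) := Real.log_nonneg (by nlinarith [sq_nonneg ‖x‖])
  have h2 : (0:ℝ) ≤ Real.log π := Real.log_nonneg (by linarith [Real.pi_gt_three])
  unfold Vpot; linarith

lemma vpot_cont : Continuous Vpot := by
  have : Continuous fun x : E2 => 1 + ‖x‖ ^ 2 := by continuity
  exact (continuous_const.mul (this.log (fun x => by positivity))).add continuous_const

lemma vpot_sub_le (x y : E2) :
    Vpot (x - y) ≤ Vpot x + (2 * Real.log 2 + 2 * Real.log (1 + ‖y‖ ^ 2)) := by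
  have hb : 1 + ‖x - y‖ ^ 2 ≤ 2 * ((1 + ‖x‖ ^ 2) * (1 + ‖y‖ ^ 2)) := by
    have h1 : ‖x - y‖ ≤ ‖x‖ + ‖y‖ := norm_sub_le x y
    have h2 : ‖x - y‖ ^ 2 ≤ (‖x‖ + ‖y‖) ^ 2 := by
      apply pow_le_pow_left₀ (norm_nonneg _) h1
    nlinarith [norm_nonneg x, norm_nonneg y, sq_nonneg (‖x‖ - ‖y‖), sq_nonneg (‖x‖ * ‖y‖)]
  have hlog : Real.log (1 + ‖x - y‖ ^ 2) ≤
      Real.log 2 + Real.log (1 + ‖x‖ ^ 2) + Real.log (1 + ‖y‖ ^ 2) := by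
    calc Real.log (1 + ‖x - y‖ ^ 2) ≤ Real.log (2 * ((1 + ‖x‖ ^ 2) * (1 + ‖y‖ ^ 2))) :=
          Real.log_le_log (by positivity) hb
      _ = Real.log 2 + Real.log (1 + ‖x‖ ^ 2) + Real.log (1 + ‖y‖ ^ 2) := by
          rw [Real.log_mul (by norm_num) (by positivity), Real.log_mul (by positivity) (by positivity)]
          ring
  unfold Vpot; linarith

instance : (volume : Measure (E2 × E2)).IsAddRightInvariant :=
  Measure.prod.instIsAddRightInvariant

lemma integrable_vpot_shift {f : E2 → ℝ} (hfm : Measurable f) (hf0 : ∀ᵐ x : E2, 0 ≤ f x)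
    (hfi : Integrable f) (hfV : Integrable (fun x => Vpot x * f x)) (y : E2) :
    Integrable (fun x => Vpot (x - y) * f x) := by
  set c := 2 * Real.log 2 + 2 * Real.log (1 + ‖y‖ ^ 2) with hc
  have hg : Integrable (fun x => Vpot x * f x + c * f x) := hfV.add (hfi.const_mul c)
  refine hg.mono' ?_ ?_
  · exact ((vpot_cont.measurable.comp (measurable_id.sub measurable_const)).mul
      hfm).aestronglyMeasurable
  · filter_upwards [hf0] with x hx
    have h1 : 0 ≤ Vpot (x - y) * f x := mul_nonneg (vpot_nonneg _) hx
    rw [Real.norm_eq_abs, abs_of_nonneg h1]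
    have h2 := mul_le_mul_of_nonneg_right (vpot_sub_le x y) hx
    nlinarith
  
lemma admissible_translate {f : E2 → ℝ} (hf : Admissible f) (y : E2) :
    Admissible (fun x => f (x + y)) := by
  obtain ⟨hm, h0, hi, he, hV, hD⟩ := hf
  refine ⟨hm.comp (measurable_add_const y), ?_, hi.comp_add_right y, ?_, ?_, ?_⟩
  · have : ∀ᶠ z in Filter.map (· + y) (ae (volume : Measure E2)), 0 ≤ f z := by
      rw [map_add_right_ae]; exact h0
    exact eventually_map.mp this
  · simpa using he.comp_add_right y
  · have h := (integrable_vpot_shift hm h0 hi hV y).comp_add_right y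
    simpa [add_sub_cancel_right] using h
  · have h := hD.comp_add_right (y, y)
    simpa [Prod.fst_add, Prod.snd_add, add_sub_add_right_eq_sub] using h

lemma exists_ball_mass {f : E2 → ℝ} (hfi : Integrable f) {M : ℝ} (hM : M = ∫ x, f x)
    (hM0 : 0 < M) : ∃ R : ℝ, 0 ≤ R ∧ M / 2 ≤ ∫ x in Metric.ball (0:E2) R, f x := by
  have hmon : Monotone (fun n : ℕ => Metric.ball (0:E2) n) := fun a b h =>
    Metric.ball_subset_ball (by exact_mod_cast h)
  have hun : (⋃ n : ℕ, Metric.ball (0:E2) n) = Set.univ := Metric.iUnion_ball_nat 0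
  have ht := tendsto_setIntegral_of_monotone (μ := volume) (f := f)
    (fun n : ℕ => measurableSet_ball) hmon (by rw [hun]; exact hfi.integrableOn)
  rw [hun, setIntegral_univ] at ht
  have hev : ∀ᶠ n : ℕ in atTop, M / 2 ≤ ∫ x in Metric.ball (0:E2) n, f x := by
    apply ht.eventually (eventually_ge_nhds ?_)
    rw [← hM]; linarith
  obtain ⟨n, hn⟩ := hev.exists
  exact ⟨n, n.cast_nonneg, hn⟩

lemma tendsto_I {f : E2 → ℝ} (hm : Measurable f) (h0 : ∀ᵐ x : E2, 0 ≤ f x)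
    (hi : Integrable f) (hV : Integrable (fun x => Vpot x * f x)) {M : ℝ}
    (hM : M = ∫ x, f x) (hM0 : 0 < M) :
    Tendsto (fun y : E2 => ∫ x, Vpot (x - y) * f x) (comap norm atTop) atTop := by
  rw [tendsto_atTop]
  intro C
  obtain ⟨R, hR0, hRm⟩ := exists_ball_mass hi hM hM0
  set K := (C - M * Real.log π) / M with hK
  rw [eventually_comap]
  filter_upwards [eventually_ge_atTop (R + Real.exp K)] with r hr y hy
  have hyn : R + Real.exp K ≤ ‖y‖ := by rw [hy]; exact hr
  have hyR : 0 ≤ ‖y‖ - R := by have := Real.exp_pos K; linarith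
  set L := 2 * Real.log (1 + (‖y‖ - R) ^ 2) with hL
  have hL0 : 0 ≤ L := by
    have : (0:ℝ) ≤ Real.log (1 + (‖y‖ - R) ^ 2) :=
      Real.log_nonneg (by nlinarith [sq_nonneg (‖y‖ - R)])
    linarith
  have hKL : 2 * K ≤ L := by
    have h1 : Real.exp K ≤ 1 + (‖y‖ - R) ^ 2 := by nlinarith [sq_nonneg (‖y‖ - R - 1), Real.exp_pos K]
    have h2 : Real.log (Real.exp K) ≤ Real.log (1 + (‖y‖ - R) ^ 2) :=
      Real.log_le_log (Real.exp_pos K) h1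
    rw [Real.log_exp] at h2
    linarith
  have hint1 : Integrable (fun x => Vpot (x - y) * f x) :=
    integrable_vpot_shift hm h0 hi hV y
  have hint2 : Integrable (fun x => Real.log π * f x) := hi.const_mul _
  have hWeq : (fun x : E2 => 2 * Real.log (1 + ‖x - y‖ ^ 2) * f x)
      = fun x => Vpot (x - y) * f x - Real.log π * f x := by
    funext x; simp only [Vpot]; ring
  have hW : Integrable (fun x : E2 => 2 * Real.log (1 + ‖x - y‖ ^ 2) * f x) := by
    rw [hWeq]; exact hint1.sub hint2
  have hsplit : ∫ x, Vpot (x - y) * f x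
      = (∫ x, 2 * Real.log (1 + ‖x - y‖ ^ 2) * f x) + Real.log π * M := by
    have h3 : (fun x : E2 => Vpot (x - y) * f x)
        = fun x => 2 * Real.log (1 + ‖x - y‖ ^ 2) * f x + Real.log π * f x := by
      funext x; simp only [Vpot]; ring
    rw [h3, integral_add hW hint2, integral_const_mul, ← hM]
  set B := Metric.ball (0:E2) R with hB
  have hWlow : L * (M / 2) ≤ ∫ x, 2 * Real.log (1 + ‖x - y‖ ^ 2) * f x := by
    have step1 : L * (M / 2) ≤ L * ∫ x in B, f x := mul_le_mul_of_nonneg_left hRm hL0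
    have step2 : L * ∫ x in B, f x = ∫ x in B, L * f x := (integral_const_mul L f).symm
    have step3 : (∫ x in B, L * f x) ≤ ∫ x in B, 2 * Real.log (1 + ‖x - y‖ ^ 2) * f x := by
      refine integral_mono_ae ((hi.const_mul L).integrableOn) (hW.integrableOn) ?_
      have hae : ∀ᵐ x ∂(volume.restrict B), 0 ≤ f x := ae_restrict_of_ae h0
      have hmem : ∀ᵐ x ∂(volume.restrict B), x ∈ B := ae_restrict_mem measurableSet_ball
      filter_upwards [hae, hmem] with x hx hxB
      have hxR : ‖x‖ < R := by
        rw [hB, Metric.mem_ball, dist_zero_right] at hxB; exact hxB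
      have hxy : ‖y‖ - R ≤ ‖x - y‖ := by
        have h4 : ‖y‖ - ‖x‖ ≤ ‖y - x‖ := norm_sub_norm_le y x
        rw [norm_sub_rev] at h4
        linarith
      have h5 : (‖y‖ - R) ^ 2 ≤ ‖x - y‖ ^ 2 := pow_le_pow_left₀ hyR hxy 2
      have h6 : Real.log (1 + (‖y‖ - R) ^ 2) ≤ Real.log (1 + ‖x - y‖ ^ 2) :=
        Real.log_le_log (by nlinarith [sq_nonneg (‖y‖ - R)]) (by linarith)
      have : L ≤ 2 * Real.log (1 + ‖x - y‖ ^ 2) := by rw [hL]; linarith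
      exact mul_le_mul_of_nonneg_right this hx
    have step4 : (∫ x in B, 2 * Real.log (1 + ‖x - y‖ ^ 2) * f x)
        ≤ ∫ x, 2 * Real.log (1 + ‖x - y‖ ^ 2) * f x := by
      refine setIntegral_le_integral hW ?_
      filter_upwards [h0] with x hx
      have : (0:ℝ) ≤ Real.log (1 + ‖x - y‖ ^ 2) :=
        Real.log_nonneg (by nlinarith [sq_nonneg ‖x - y‖])
      exact mul_nonneg (by linarith) hx
    linarith
  have hKM : K * M = C - M * Real.log π := by
    rw [hK]; field_simp [hM0.ne']
  rw [hsplit]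
  nlinarith [mul_le_mul_of_nonneg_right hKL (le_of_lt (half_pos hM0))]


lemma e2_neBot : (Filter.comap (norm : E2 → ℝ) Filter.atTop).NeBot := by
  rw [Filter.comap_neBot_iff]
  intro t ht
  obtain ⟨a, ha⟩ := mem_atTop_sets.mp ht
  refine ⟨(max a 0) • EuclideanSpace.single (0 : Fin 2) (1:ℝ), ha _ ?_⟩
  rw [norm_smul, EuclideanSpace.norm_single]
  simp only [norm_one, mul_one, Real.norm_eq_abs, abs_of_nonneg (le_max_right a 0)]
  exact le_max_left a 0

/-- For β < 0 the free energies of translates f_y(x) = f(x+y) tend to −∞ as |y| → ∞;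
in particular neither F⁺_β nor F⁻_β is bounded from below on the mass-M class. -/
theorem free_energy_translation_unbounded (β : ℝ) (hβ : β < 0)
    (f : E2 → ℝ) (hf : Admissible f) (M : ℝ) (hM : M = ∫ x, f x) (hM0 : 0 < M) :
    Tendsto (fun y : E2 => Fminus β (fun x => f (x + y)))
      (Filter.comap norm Filter.atTop) Filter.atBot ∧
    Tendsto (fun y : E2 => Fplus β (fun x => f (x + y)))
      (Filter.comap norm Filter.atTop) Filter.atBot ∧
    (¬ ∃ C : ℝ, ∀ g : E2 → ℝ, Admissible g → (∫ x, g x) = M → C ≤ Fminus β g) ∧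
    (¬ ∃ C : ℝ, ∀ g : E2 → ℝ, Admissible g → (∫ x, g x) = M → C ≤ Fplus β g) := by
  obtain ⟨hm, h0, hi, he, hV, hD⟩ := hf
  have hf' : Admissible f := ⟨hm, h0, hi, he, hV, hD⟩
  set S : ℝ := ∫ x, f x * Real.log (f x) with hS
  set D : ℝ := ∫ p : E2 × E2, f p.1 * f p.2 * Real.log ‖p.1 - p.2‖ with hDdef
  have e1 : ∀ y : E2, (∫ x, f (x + y) * Real.log (f (x + y))) = S :=
    fun y => integral_add_right_eq_self (μ := (volume : Measure E2))
      (fun x => f x * Real.log (f x)) y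
  have e2 : ∀ y : E2, (∫ x, Vpot x * f (x + y)) = ∫ x, Vpot (x - y) * f x := by
    intro y
    have h := integral_add_right_eq_self (μ := (volume : Measure E2))
      (fun x => Vpot (x - y) * f x) y
    simpa [add_sub_cancel_right] using h
  have e3 : ∀ y : E2,
      (∫ p : E2 × E2, f (p.1 + y) * f (p.2 + y) * Real.log ‖p.1 - p.2‖) = D := by
    intro y
    have h := integral_add_right_eq_self (μ := (volume : Measure (E2 × E2)))
      (fun p : E2 × E2 => f p.1 * f p.2 * Real.log ‖p.1 - p.2‖) (y, y)
    simpa [Prod.fst_add, Prod.snd_add, add_sub_add_right_eq_sub] using h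
  have eM : ∀ y : E2, (∫ x, f (x + y)) = M := by
    intro y
    rw [hM]
    exact integral_add_right_eq_self (μ := (volume : Measure E2)) f y
  have hI := tendsto_I hm h0 hi hV hM hM0
  have hFm : (fun y : E2 => Fminus β (fun x => f (x + y)))
      = fun y => β * (∫ x, Vpot (x - y) * f x) + (S + (1 / (4 * π)) * D) := by
    funext y
    simp only [Fminus]
    rw [e1 y, e2 y, e3 y]
    ring
  have hFp : (fun y : E2 => Fplus β (fun x => f (x + y)))
      = fun y => β * (∫ x, Vpot (x - y) * f x) + (S - (1 / (4 * π)) * D) := by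
    funext y
    simp only [Fplus]
    rw [e1 y, e2 y, e3 y]
    ring
  have htm : Tendsto (fun y : E2 => Fminus β (fun x => f (x + y)))
      (Filter.comap norm Filter.atTop) Filter.atBot := by
    rw [hFm]
    exact tendsto_atBot_add_const_right _ _ ((tendsto_const_mul_atBot_of_neg hβ).mpr hI)
  have htp : Tendsto (fun y : E2 => Fplus β (fun x => f (x + y)))
      (Filter.comap norm Filter.atTop) Filter.atBot := by
    rw [hFp]
    exact tendsto_atBot_add_const_right _ _ ((tendsto_const_mul_atBot_of_neg hβ).mpr hI)
  have := e2_neBot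
  refine ⟨htm, htp, ?_, ?_⟩
  · rintro ⟨C, hC⟩
    obtain ⟨y, hy⟩ := (htm.eventually (eventually_lt_atBot C)).exists
    exact absurd (hC _ (admissible_translate hf' y) (eM y)) (not_le.mpr hy)
  · rintro ⟨C, hC⟩
    obtain ⟨y, hy⟩ := (htp.eventually (eventually_lt_atBot C)).exists
    exact absurd (hC _ (admissible_translate hf' y) (eM y)) (not_le.mpr hy)
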